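/- Let X be a locally compact separable metric space, r ∈ ℕ, and f : X → ℝ^r a continuous map. If fat_f X is empty, then the image f(X) has empty interior in ℝ^r. -/

import Mathlib

open TopologicalSpace

/-- The set of fat points of `A ⊆ X` with respect to `f : X → ℝ^r`: the points `x ∈ A`
such that for every neighbourhood `V` of `x` in `X`, the image `f '' (A ∩ V)` has nonempty
interior in `ℝ^r`. -/
def fatPoints {X : Type*} [TopologicalSpace X] {r : ℕ}
    (f : X → EuclideanSpace ℝ (Fin r)) (A : Set X) : Set X :=
  {x ∈ A | ∀ V ∈ nhds x, (interior (f '' (A ∩ V))).Nonempty}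

lemma isMeagre_interior_empty {Y : Type*} [TopologicalSpace Y] [BaireSpace Y]
    {s : Set Y} (hs : IsMeagre s) : interior s = ∅ := by
  have : Dense sᶜ := dense_of_mem_residual hs
  rwa [interior_eq_empty_iff_dense_compl]

/-- If a locally compact separable metric space has no fat point with respect to a
continuous map `f : X → ℝ^r`, then the image `f(X)` has empty interior (is codense). -/
theorem interior_image_empty_of_no_fatPoints (X : Type*) [MetricSpace X]
    [SeparableSpace X] [LocallyCompactSpace X] (r : ℕ)
    (f : X → EuclideanSpace ℝ (Fin r)) (hf : Continuous f)
    (h : fatPoints f Set.univ = ∅) :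
    interior (f '' Set.univ) = ∅ := by
  -- every point has a compact neighbourhood whose image has empty interior
  have key : ∀ x : X, ∃ K : Set X, K ∈ nhds x ∧ IsCompact K ∧ interior (f '' K) = ∅ := by
    intro x
    have hx : x ∉ fatPoints f Set.univ := by simp [h]
    simp only [fatPoints, Set.mem_setOf_eq, Set.mem_univ, true_and, not_forall] at hx
    obtain ⟨V, hV, hVi⟩ := hx
    obtain ⟨K, hK, hKV, hKc⟩ := LocallyCompactSpace.local_compact_nhds x V hV
    refine ⟨K, hK, hKc, ?_⟩
    rw [Set.not_nonempty_iff_eq_empty] at hVi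
    have : f '' K ⊆ f '' (Set.univ ∩ V) := by
      rw [Set.univ_inter]; exact Set.image_mono (f := f) hKV
    exact Set.eq_empty_of_subset_empty ((interior_mono this).trans hVi.subset)
  choose K hKnhds hKc hKi using key
  haveI : SecondCountableTopology X := UniformSpace.secondCountable_of_separable X
  obtain ⟨t, htc, htU⟩ := TopologicalSpace.countable_cover_nhds hKnhds
  -- the image is contained in a countable union of nowhere dense sets
  have hmeagre : IsMeagre (f '' Set.univ) := by
    rw [isMeagre_iff_countable_union_isNowhereDense]
    refine ⟨(fun x => f '' K x) '' t, ?_, htc.image _, ?_⟩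
    · rintro s ⟨x, -, rfl⟩
      have hclosed : IsClosed (f '' K x) := ((hKc x).image hf).isClosed
      rw [hclosed.isNowhereDense_iff]
      exact hKi x
    · rintro y ⟨x, -, rfl⟩
      have : x ∈ ⋃ a ∈ t, K a := htU ▸ Set.mem_univ x
      obtain ⟨a, ha, hxa⟩ := Set.mem_iUnion₂.1 this
      exact Set.mem_sUnion.2 ⟨f '' K a, ⟨a, ha, rfl⟩, Set.mem_image_of_mem f hxa⟩
  exact isMeagre_interior_empty hmeagre
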